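/- Let d ≥ 1, let p ≥ 4 be an even integer, and let θ : [−π,π]^d → ℝ be a continuous function with ∫_{[−π,π]^d} θ(x) dx = 0. Then ∫_{[−π,π]^d} ∫_{[−π,π]^d} (θ(x) − θ(y))² θ(x)^{p−2} dy dx ≥ (2π)^d ∫_{[−π,π]^d} θ(x)^p dx. -/

import Mathlib

open Real MeasureTheory

/-- The period cell `[−π,π]^d`. -/
def periodCell (d : ℕ) : Set (EuclideanSpace ℝ (Fin d)) :=
  {x | ∀ i, x i ∈ Set.Icc (-π) π}

lemma periodCell_eq (d : ℕ) :
    periodCell d = (MeasurableEquiv.toLp 2 (Fin d → ℝ)).symm ⁻¹'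
      (Set.univ.pi fun _ : Fin d => Set.Icc (-π) π) := by
  ext x
  simp [periodCell, Set.mem_pi, Pi.le_def, forall_and,
    MeasurableEquiv.coe_toLp_symm]

lemma periodCell_compact (d : ℕ) : IsCompact (periodCell d) := by
  have h : periodCell d = (EuclideanSpace.equiv (Fin d) ℝ).toHomeomorph ⁻¹'
      (Set.univ.pi fun _ : Fin d => Set.Icc (-π) π) := by
    ext x; simp [periodCell, Set.mem_pi, Pi.le_def, forall_and]
  rw [h, Homeomorph.isCompact_preimage]
  exact isCompact_univ_pi fun _ => isCompact_Icc

lemma periodCell_volume (d : ℕ) :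
    (volume (periodCell d)).toReal = (2 * π) ^ d := by
  rw [periodCell_eq]
  rw [(EuclideanSpace.volume_preserving_symm_measurableEquiv_toLp (Fin d)).measure_preimage
    (MeasurableSet.univ_pi fun _ => measurableSet_Icc).nullMeasurableSet]
  rw [volume_pi_pi]
  simp only [Real.volume_Icc, sub_neg_eq_add]
  rw [Finset.prod_const]
  rw [ENNReal.toReal_pow, ENNReal.toReal_ofReal (by positivity)]
  ring_nf
  simp

/-- For `d ≥ 1`, an even integer `p ≥ 4`, and a continuous zero-mean
`θ : [−π,π]^d → ℝ`, one has
`∬ (θ(x) − θ(y))² θ(x)^{p−2} dy dx ≥ (2π)^d ∫ θ(x)^p dx`. -/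
theorem zero_mean_double_integral_lower_bound (d : ℕ) (hd : 1 ≤ d)
    (p : ℕ) (hp : 4 ≤ p) (hpeven : Even p)
    (θ : EuclideanSpace ℝ (Fin d) → ℝ) (hθ : ContinuousOn θ (periodCell d))
    (hmean : (∫ x in periodCell d, θ x) = 0) :
    (∫ x in periodCell d, (∫ y in periodCell d, (θ x - θ y) ^ 2 * θ x ^ (p - 2))) ≥
      (2 * π) ^ d * (∫ x in periodCell d, θ x ^ p) := by
  set K := periodCell d with hKdef
  have hK : IsCompact K := periodCell_compact d
  have hKm : MeasurableSet K := hK.measurableSet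
  have hvol : (volume K).toReal = (2 * π) ^ d := periodCell_volume d
  have hint : IntegrableOn θ K := hθ.integrableOn_compact hK
  have hint2 : IntegrableOn (fun y => θ y ^ 2) K := (hθ.pow 2).integrableOn_compact hK
  have hintp : IntegrableOn (fun y => θ y ^ p) K := (hθ.pow p).integrableOn_compact hK
  have hintpm2 : IntegrableOn (fun y => θ y ^ (p - 2)) K :=
    (hθ.pow (p - 2)).integrableOn_compact hK
  set I2 := ∫ y in K, θ y ^ 2 with hI2
  have hI2nn : 0 ≤ I2 := setIntegral_nonneg hKm fun y _ => sq_nonneg _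
  have hIpm2nn : 0 ≤ ∫ y in K, θ y ^ (p - 2) :=
    setIntegral_nonneg hKm fun y _ => Even.pow_nonneg (by
      rcases hpeven with ⟨k, hk⟩; exact ⟨k - 1, by omega⟩) _
  -- inner integral computation
  have hinner : ∀ x, (∫ y in K, (θ x - θ y) ^ 2 * θ x ^ (p - 2)) =
      (2 * π) ^ d * θ x ^ p + I2 * θ x ^ (p - 2) := by
    intro x
    have hfun : (fun y => (θ x - θ y) ^ 2 * θ x ^ (p - 2)) =
        fun y => (θ x ^ 2 * θ x ^ (p - 2)) +
          ((-2 * θ x * θ x ^ (p - 2)) * θ y + (θ x ^ (p - 2)) * θ y ^ 2) := by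
      funext y; ring
    have hc : IntegrableOn (fun _ : EuclideanSpace ℝ (Fin d) =>
        θ x ^ 2 * θ x ^ (p - 2)) K := by
      refine integrableOn_const hK.measure_lt_top.ne
    have ha : IntegrableOn (fun y => -2 * θ x * θ x ^ (p - 2) * θ y) K :=
      hint.const_mul _
    have hb : IntegrableOn (fun y => θ x ^ (p - 2) * θ y ^ 2) K :=
      hint2.const_mul _
    have hab : IntegrableOn (fun y =>
        -2 * θ x * θ x ^ (p - 2) * θ y + θ x ^ (p - 2) * θ y ^ 2) K := ha.add hb
    rw [hfun, integral_add hc hab, integral_add ha hb,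
      setIntegral_const, integral_const_mul, integral_const_mul, hmean]
    have hpow : θ x ^ 2 * θ x ^ (p - 2) = θ x ^ p := by
      rw [← pow_add]; congr 1; omega
    rw [hpow]
    simp [smul_eq_mul, Measure.real, hvol, hI2]
    ring
  simp only [hinner]
  have ha : IntegrableOn (fun x => (2 * π) ^ d * θ x ^ p) K := hintp.const_mul _
  have hb : IntegrableOn (fun x => I2 * θ x ^ (p - 2)) K := hintpm2.const_mul _
  rw [integral_add ha hb, integral_const_mul, integral_const_mul]
  nlinarith [mul_nonneg hI2nn hIpm2nn]
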